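/- Let Ω ⊆ ℝ^d be a convex set, ψ : ℝ^d → ℝ convex and differentiable, η > 0, and let K, τ, J be positive integers with K = Jτ. For j ∈ {1, …, J} set T_j = {τ(j−1)+1, …, τj}. Let g_1, …, g_K ∈ ℝ^d, define g_{(j)} = (1/τ) ∑_{k ∈ T_j} g_k, and suppose that for each j there is w_{(j)} ∈ Ω satisfying ⟨w_{(j)}, ∑_{i<j} g_{(i)}⟩ + ψ(w_{(j)})/η ≤ ⟨w, ∑_{i<j} g_{(i)}⟩ + ψ(w)/η for all w ∈ Ω. Set w_k = w_{(j)} for all k ∈ T_j, and suppose ψ attains its minimum over Ω at some w_min ∈ Ω. Then for any u ∈ Ω: ∑_{k=1}^K ⟨g_k, w_k − u⟩ ≤ τ(ψ(u) − ψ(w_min))/η + ∑_{k=1}^K sup_{w∈Ω} ( ⟨w_k − w, g_k⟩ − D_ψ(w, w_k)/η ), where the suprema are taken in the extended reals ℝ ∪ {+∞}. -/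

import Mathlib

open scoped BigOperators RealInnerProductSpace

private lemma sum_blocks {M : Type*} [AddCommMonoid M] (τ : ℕ) (f : ℕ → M) :
    ∀ J : ℕ, ∑ k ∈ Finset.range (J * τ), f k
      = ∑ j ∈ Finset.range J, ∑ k ∈ Finset.Ico (τ * j) (τ * (j + 1)), f k := by
  intro J
  induction J with
  | zero => simp
  | succ n ih =>
    rw [Finset.sum_range_succ, ← ih, Finset.range_eq_Ico, Finset.range_eq_Ico,
      Nat.mul_comm (n+1) τ, Nat.mul_comm n τ,
      Finset.sum_Ico_consecutive f (Nat.zero_le (τ * n))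
        (Nat.mul_le_mul_left τ (by omega : n ≤ n + 1))]

theorem stmt4 {d : ℕ} (K τ J : ℕ) (hτ : 0 < τ) (hJ : 0 < J) (hK : K = J * τ)
    (Ω : Set (EuclideanSpace ℝ (Fin d))) (hΩ : Convex ℝ Ω)
    (ψ : EuclideanSpace ℝ (Fin d) → ℝ)
    (hψconv : ConvexOn ℝ Set.univ ψ) (hψdiff : Differentiable ℝ ψ)
    (η : ℝ) (hη : 0 < η) (g : ℕ → EuclideanSpace ℝ (Fin d))
    (G : ℕ → EuclideanSpace ℝ (Fin d))
    (hG : ∀ j, G j = (τ : ℝ)⁻¹ • ∑ k ∈ Finset.Ico (τ * j) (τ * (j + 1)), g k)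
    (w : ℕ → EuclideanSpace ℝ (Fin d))
    (hw : ∀ j < J, w j ∈ Ω ∧ ∀ v ∈ Ω,
      ⟪w j, ∑ i ∈ Finset.range j, G i⟫ + ψ (w j) / η ≤
        ⟪v, ∑ i ∈ Finset.range j, G i⟫ + ψ v / η)
    (wmin : EuclideanSpace ℝ (Fin d)) (hwmin : wmin ∈ Ω)
    (hwminle : ∀ v ∈ Ω, ψ wmin ≤ ψ v) :
    ∀ u ∈ Ω,
      ((∑ k ∈ Finset.range K, ⟪g k, w (k / τ) - u⟫ : ℝ) : EReal) ≤
        (((τ : ℝ) * (ψ u - ψ wmin) / η : ℝ) : EReal) +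
          ∑ k ∈ Finset.range K, ⨆ v ∈ Ω,
            ((⟪w (k / τ) - v, g k⟫ -
                (ψ v - ψ (w (k / τ)) -
                  ⟪gradient ψ (w (k / τ)), v - w (k / τ)⟫) / η : ℝ) : EReal) := by
  intro u hu
  have hτR : (τ : ℝ) ≠ 0 := Nat.cast_ne_zero.mpr hτ.ne'
  -- notation
  set S : ℕ → EuclideanSpace ℝ (Fin d) := fun j => ∑ i ∈ Finset.range j, G i with hS
  set F : ℕ → EuclideanSpace ℝ (Fin d) → ℝ := fun j v => ⟪v, S j⟫ + ψ v / η with hF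
  -- gradient is fderiv
  have hgrad : ∀ x y : EuclideanSpace ℝ (Fin d), ⟪gradient ψ x, y⟫ = fderiv ℝ ψ x y := by
    intro x y
    rw [gradient, ← InnerProductSpace.toDual_apply_apply, LinearIsometryEquiv.apply_symm_apply]
  -- first-order optimality
  have hA : ∀ j < J, ∀ v ∈ Ω,
      0 ≤ ⟪v - w j, S j⟫ + ⟪gradient ψ (w j), v - w j⟫ / η := by
    intro j hj v hv
    have hmem := (hw j hj).1
    have hmin : IsMinOn (F j) Ω (w j) := fun x hx => (hw j hj).2 x hx
    have h1 : HasFDerivAt (fun x => ⟪x, S j⟫) (innerSL ℝ (S j)) (w j) := by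
      have heq : (fun x : EuclideanSpace ℝ (Fin d) => ⟪x, S j⟫)
          = fun x => innerSL ℝ (S j) x := funext fun x => real_inner_comm _ _
      rw [heq]
      exact (innerSL ℝ (S j)).hasFDerivAt
    have h2 : HasFDerivAt (fun x => ψ x / η) (η⁻¹ • fderiv ℝ ψ (w j)) (w j) := by
      simpa [div_eq_inv_mul] using ((hψdiff (w j)).hasFDerivAt.const_mul η⁻¹)
    have hd : HasFDerivAt (F j) (innerSL ℝ (S j) + η⁻¹ • fderiv ℝ ψ (w j)) (w j) :=
      h1.add h2
    have hyc : v - w j ∈ posTangentConeAt Ω (w j) :=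
      sub_mem_posTangentConeAt_of_segment_subset (hΩ.segment_subset hmem hv)
    have h0 := hmin.localize.hasFDerivWithinAt_nonneg hd.hasFDerivWithinAt hyc
    simp only [ContinuousLinearMap.add_apply, ContinuousLinearMap.smul_apply,
      innerSL_apply_apply, smul_eq_mul] at h0
    rw [hgrad, div_eq_inv_mul, real_inner_comm]
    linarith
  -- Bregman variational inequality
  have hB : ∀ j < J, ∀ v ∈ Ω,
      F j (w j) + (ψ v - ψ (w j) - ⟪gradient ψ (w j), v - w j⟫) / η ≤ F j v := by
    intro j hj v hv
    have h0 := hA j hj v hv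
    simp only [hF]
    rw [inner_sub_left] at h0
    have h1 : (ψ v - ψ (w j) - ⟪gradient ψ (w j), v - w j⟫) / η
        = (ψ v - ψ (w j)) / η - ⟪gradient ψ (w j), v - w j⟫ / η := by ring
    have h2 : (ψ v - ψ (w j)) / η = ψ v / η - ψ (w j) / η := by ring
    linarith
  -- extended iterates
  set w' : ℕ → EuclideanSpace ℝ (Fin d) := fun j => if j < J then w j else u with hw'
  have hw'Ω : ∀ j, w' j ∈ Ω := by
    intro j
    by_cases h : j < J
    · simpa [hw', h] using (hw j h).1
    · simpa [hw', h] using hu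
  set r : ℕ → ℝ := fun j => ⟪w' j - w' (j+1), G j⟫
      - (ψ (w' (j+1)) - ψ (w' j) - ⟪gradient ψ (w' j), w' (j+1) - w' j⟫) / η with hr
  -- key one-step inequality
  have hFstep : ∀ (j : ℕ) (x : EuclideanSpace ℝ (Fin d)), F (j+1) x = F j x + ⟪x, G j⟫ := by
    intro j x
    simp only [hF, hS, Finset.sum_range_succ, inner_add_right]
    ring
  have hH1 : ∀ j < J, F (j+1) (w' j) ≤ F (j+1) (w' (j+1)) + r j := by
    intro j hj
    have hwj : w' j = w j := by simp [hw', hj]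
    have hb := hB j hj (w' (j+1)) (hw'Ω (j+1))
    rw [hFstep, hFstep, hr]
    simp only [hwj] at *
    rw [inner_sub_left]
    linarith
  -- telescoping induction
  have hQ : ∀ n ≤ J, ∑ j ∈ Finset.range n, ⟪w' j, G j⟫
      ≤ F n (w' n) - F 0 (w' 0) + ∑ j ∈ Finset.range n, r j := by
    intro n
    induction n with
    | zero => simp
    | succ m ih =>
      intro hm
      have hmJ : m < J := hm
      have ih' := ih (le_of_lt hmJ)
      rw [Finset.sum_range_succ, Finset.sum_range_succ]
      have h1 := hH1 m hmJ
      have h2 : F (m+1) (w' m) = F m (w' m) + ⟪w' m, G m⟫ := hFstep m (w' m)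
      linarith
  -- main real inequality on blocks
  have hw'J : w' J = u := by simp [hw']
  have hw'0 : w' 0 = w 0 := by simp [hw', hJ]
  have hQJ := hQ J le_rfl
  rw [hw'J, hw'0] at hQJ
  have hF0 : F 0 (w 0) = ψ (w 0) / η := by simp [hF, hS]
  have hFJ : F J u = ⟪u, S J⟫ + ψ u / η := rfl
  have hmin0 : ψ wmin ≤ ψ (w 0) := hwminle (w 0) (hw 0 hJ).1
  have hMain : ∑ j ∈ Finset.range J, ⟪w' j - u, G j⟫
      ≤ (ψ u - ψ wmin) / η + ∑ j ∈ Finset.range J, r j := by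
    have hsum : ∑ j ∈ Finset.range J, ⟪w' j - u, G j⟫
        = (∑ j ∈ Finset.range J, ⟪w' j, G j⟫) - ⟪u, S J⟫ := by
      rw [hS, inner_sum, ← Finset.sum_sub_distrib]
      exact Finset.sum_congr rfl fun j _ => by rw [inner_sub_left]
    rw [hsum]
    rw [hFJ, hF0] at hQJ
    have : (ψ u - ψ wmin) / η = ψ u / η - ψ wmin / η := by ring
    have h3 : ψ wmin / η ≤ ψ (w 0) / η := (div_le_div_iff_of_pos_right hη).mpr hmin0
    linarith
  -- block structure facts
  have hdiv : ∀ j < J, ∀ k ∈ Finset.Ico (τ * j) (τ * (j + 1)), k / τ = j := by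
    intro j _ k hk
    rw [Finset.mem_Ico] at hk
    exact Nat.div_eq_of_lt_le (by rw [mul_comm]; exact hk.1) (by rw [mul_comm]; exact hk.2)
  have hblockg : ∀ j, ∑ k ∈ Finset.Ico (τ * j) (τ * (j + 1)), g k = (τ : ℝ) • G j := by
    intro j
    rw [hG j, smul_inv_smul₀ hτR]
  -- LHS as block sum
  have hLHS : ∑ k ∈ Finset.range K, ⟪g k, w (k / τ) - u⟫
      = (τ : ℝ) * ∑ j ∈ Finset.range J, ⟪w' j - u, G j⟫ := by
    rw [hK, sum_blocks, Finset.mul_sum]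
    apply Finset.sum_congr rfl
    intro j hj
    rw [Finset.mem_range] at hj
    have hwj : w' j = w j := by simp [hw', hj]
    calc ∑ k ∈ Finset.Ico (τ * j) (τ * (j + 1)), ⟪g k, w (k / τ) - u⟫
        = ∑ k ∈ Finset.Ico (τ * j) (τ * (j + 1)), ⟪g k, w j - u⟫ :=
          Finset.sum_congr rfl fun k hk => by rw [hdiv j hj k hk]
      _ = ⟪∑ k ∈ Finset.Ico (τ * j) (τ * (j + 1)), g k, w j - u⟫ := by rw [sum_inner]
      _ = (τ : ℝ) * ⟪w' j - u, G j⟫ := by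
          rw [hblockg, real_inner_smul_left, real_inner_comm, hwj]
  -- per-round lower bound values
  set rr : ℕ → ℝ := fun k => ⟪w (k / τ) - w' (k / τ + 1), g k⟫
      - (ψ (w' (k / τ + 1)) - ψ (w (k / τ))
        - ⟪gradient ψ (w (k / τ)), w' (k / τ + 1) - w (k / τ)⟫) / η with hrr
  have hrrsum : ∑ k ∈ Finset.range K, rr k = (τ : ℝ) * ∑ j ∈ Finset.range J, r j := by
    rw [hK, sum_blocks, Finset.mul_sum]
    apply Finset.sum_congr rfl
    intro j hj
    rw [Finset.mem_range] at hj
    have hwj : w' j = w j := by simp [hw', hj]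
    have hcard : ((Finset.Ico (τ * j) (τ * (j+1))).card : ℝ) = (τ : ℝ) := by
      rw [Nat.card_Ico, Nat.mul_succ, Nat.add_sub_cancel_left]
    calc ∑ k ∈ Finset.Ico (τ * j) (τ * (j + 1)), rr k
        = ∑ k ∈ Finset.Ico (τ * j) (τ * (j + 1)), (⟪w j - w' (j+1), g k⟫
          - (ψ (w' (j+1)) - ψ (w j) - ⟪gradient ψ (w j), w' (j+1) - w j⟫) / η) :=
          Finset.sum_congr rfl fun k hk => by rw [hrr]; simp only [hdiv j hj k hk]
      _ = ⟪w j - w' (j+1), ∑ k ∈ Finset.Ico (τ * j) (τ * (j+1)), g k⟫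
          - ((Finset.Ico (τ * j) (τ * (j+1))).card : ℝ)
            * ((ψ (w' (j+1)) - ψ (w j) - ⟪gradient ψ (w j), w' (j+1) - w j⟫) / η) := by
          rw [Finset.sum_sub_distrib, inner_sum, Finset.sum_const, nsmul_eq_mul]
      _ = (τ : ℝ) * r j := by
          rw [hblockg, real_inner_smul_right, hcard]
          simp only [hr, hwj]
          ring
  -- assemble the real inequality
  have hreal : ∑ k ∈ Finset.range K, ⟪g k, w (k / τ) - u⟫
      ≤ (τ : ℝ) * (ψ u - ψ wmin) / η + ∑ k ∈ Finset.range K, rr k := by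
    rw [hLHS, hrrsum]
    have hτ0 : (0 : ℝ) ≤ (τ : ℝ) := Nat.cast_nonneg τ
    have h1 := mul_le_mul_of_nonneg_left hMain hτ0
    have h2 : (τ : ℝ) * ((ψ u - ψ wmin) / η + ∑ j ∈ Finset.range J, r j)
        = (τ : ℝ) * (ψ u - ψ wmin) / η + (τ : ℝ) * ∑ j ∈ Finset.range J, r j := by ring
    linarith
  -- pass to EReal
  have hcoesum : ((∑ k ∈ Finset.range K, rr k : ℝ) : EReal)
      = ∑ k ∈ Finset.range K, ((rr k : ℝ) : EReal) :=
    map_sum (⟨⟨Real.toEReal, EReal.coe_zero⟩, EReal.coe_add⟩ : ℝ →+ EReal) _ _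
  calc ((∑ k ∈ Finset.range K, ⟪g k, w (k / τ) - u⟫ : ℝ) : EReal)
      ≤ (((τ : ℝ) * (ψ u - ψ wmin) / η + ∑ k ∈ Finset.range K, rr k : ℝ) : EReal) :=
        EReal.coe_le_coe_iff.mpr hreal
    _ = (((τ : ℝ) * (ψ u - ψ wmin) / η : ℝ) : EReal)
        + ∑ k ∈ Finset.range K, ((rr k : ℝ) : EReal) := by
        rw [EReal.coe_add, hcoesum]
    _ ≤ (((τ : ℝ) * (ψ u - ψ wmin) / η : ℝ) : EReal)
        + ∑ k ∈ Finset.range K, ⨆ v ∈ Ω,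
            ((⟪w (k / τ) - v, g k⟫ -
                (ψ v - ψ (w (k / τ)) -
                  ⟪gradient ψ (w (k / τ)), v - w (k / τ)⟫) / η : ℝ) : EReal) := by
        apply add_le_add_right
        apply Finset.sum_le_sum
        intro k _
        exact le_iSup₂_of_le (w' (k / τ + 1)) (hw'Ω (k / τ + 1)) (le_refl _)
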